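/- Let k be a field and n ≥ 1, q ≥ 1 integers with q ≤ n. Then H^p(ℙ^n_k, Ω^q_{ℙ^n}(q)) = 0 for all p ≥ 0, and H^p(ℙ^n_k, O_{ℙ^n}) = 0 for all p ≥ 1; equivalently, H^p(ℙ^n, Λ^q(Ω_{ℙ^n}(1))) = 0 whenever p + q > 0. -/

import Mathlib

/-!
STATEMENT 12: Let k be a field and n ≥ 1, q ≥ 1 integers with q ≤ n.  Then
`H^p(ℙ^n_k, Ω^q_{ℙ^n}(q)) = 0` for all p ≥ 0, and `H^p(ℙ^n_k, O_{ℙ^n}) = 0` for all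
p ≥ 1; equivalently (as `Λ^0(Ω(1)) = O`), `H^p(ℙ^n, Λ^q(Ω_{ℙ^n}(1))) = 0` whenever
p + q > 0.

Mathlib has no sheaf cohomology on projective space, so we use the faithful standard
model: `Ω^q(q) = Λ^q(Ω(1))` is, by the Euler sequence, the kernel of the Koszul
contraction of `Λ^q(O^{⊕(n+1)})` with the Euler section, and its cohomology is computed
by the Čech complex with respect to the standard affine cover.
-/

noncomputable section
namespace CechProj

open Finset

variable (n : ℕ) (R : Type) [CommRing R]

/-- The ring of Laurent polynomials in the `n+1` homogeneous coordinates `x_0, …, x_n`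
(the localization of `R[x_0,…,x_n]` at `x_0⋯x_n`), modeled as the monoid algebra on the
exponent group `Fin (n+1) → ℤ`. -/
abbrev Laurent : Type := AddMonoidAlgebra R (Fin (n + 1) → ℤ)

/-- `Γ(U_T, O(d))`: the degree-`d` part of the localization of `R[x_0,…,x_n]` at the
variables `x_i`, `i ∈ T`; this is the module of sections of the Serre twisting sheaf
`O(d)` on `ℙ^n_R` over the open set `U_T = {x_i ≠ 0 for all i ∈ T}`.  It is the span of
the monomials `x^e` with `∑ e_i = d` and `e_i ≥ 0` for `i ∉ T`. -/
def sec (T : Set (Fin (n + 1))) (d : ℤ) : Submodule R (Laurent n R) :=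
  Submodule.span R
    {x | ∃ e : Fin (n + 1) → ℤ, (∑ i, e i) = d ∧ (∀ i ∉ T, 0 ≤ e i) ∧
      x = AddMonoidAlgebra.single e (1 : R)}

lemma sec_mono {T T' : Set (Fin (n + 1))} (h : T' ⊆ T) (d : ℤ) :
    sec n R T' d ≤ sec n R T d := by
  apply Submodule.span_mono
  rintro x ⟨e, h1, h2, h3⟩
  exact ⟨e, h1, fun i hi => h2 i (fun hc => hi (h hc)), h3⟩


lemma range_face_subset {p : ℕ} (t : Fin (p + 2) ↪o Fin (n + 1)) (j : Fin (p + 2)) :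
    Set.range ((Fin.succAboveOrderEmb j).trans t) ⊆ Set.range t := by
  rintro x ⟨a, rfl⟩; exact ⟨_, rfl⟩


/-- The homogeneous coordinate `x_i`, as a Laurent polynomial. -/
def X (i : Fin (n + 1)) : Laurent n R := AddMonoidAlgebra.single (Pi.single i (1 : ℤ)) 1

/-- `Γ(U_T, Ω^q_{ℙ^n}(q)) = Γ(U_T, Λ^q(Ω_{ℙ^n}(1)))`.  Via the Euler sequence
`0 → Ω(1) → O^{n+1} → O(1) → 0`, the sheaf `Λ^q(Ω(1))` is the kernel of the Koszul
contraction `Λ^q(O^{⊕(n+1)}) → Λ^{q−1}(O^{⊕(n+1)})(1)` with the Euler section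
`(x_0, …, x_n)`.  We realize `Λ^q(O^{⊕(n+1)})` over `U_T` as the module of alternating
functions on `q`-tuples of indices with values in `Γ(U_T, O)`, and take the kernel of
the contraction. -/
def omegaSec (q : ℕ) (T : Set (Fin (n + 1))) :
    Submodule R ((Fin q → Fin (n + 1)) → Laurent n R) where
  carrier := {ω |
    (∀ s, ω s ∈ sec n R T 0) ∧
    (∀ (s : Fin q → Fin (n + 1)) (σ : Equiv.Perm (Fin q)),
      ω (s ∘ σ) = (Equiv.Perm.sign σ : ℤ) • ω s) ∧
    (∀ s, ¬ Function.Injective s → ω s = 0) ∧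
    (∀ (m : ℕ) (h : q = m + 1) (s' : Fin m → Fin (n + 1)),
      (∑ i : Fin (n + 1), X n R i * ω (fun j => (Fin.cons i s' : Fin (m+1) → Fin (n+1)) (Fin.cast h j))) = 0)}
  zero_mem' := by
    refine ⟨fun s => Submodule.zero_mem _, fun s σ => by simp, fun s _ => rfl, ?_⟩
    intro m h s'
    simp
  add_mem' := by
    rintro ω ω' ⟨ha, hb, hc, hd⟩ ⟨ha', hb', hc', hd'⟩
    refine ⟨fun s => Submodule.add_mem _ (ha s) (ha' s), ?_, ?_, ?_⟩
    · intro s σ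
      simp only [Pi.add_apply, hb s σ, hb' s σ, smul_add]
    · intro s hs
      simp only [Pi.add_apply, hc s hs, hc' s hs, add_zero]
    · intro m h s'
      simp only [Pi.add_apply, mul_add, Finset.sum_add_distrib, hd m h s', hd' m h s',
        add_zero]
  smul_mem' := by
    rintro c ω ⟨ha, hb, hc, hd⟩
    refine ⟨fun s => Submodule.smul_mem _ _ (ha s), ?_, ?_, ?_⟩
    · intro s σ
      simp only [Pi.smul_apply, hb s σ, smul_comm c]
    · intro s hs
      simp only [Pi.smul_apply, hc s hs, smul_zero]
    · intro m h s'
      simp only [Pi.smul_apply, mul_smul_comm, ← Finset.smul_sum, hd m h s', smul_zero]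

lemma omegaSec_mono (q : ℕ) {T T' : Set (Fin (n + 1))} (h : T' ⊆ T) :
    omegaSec n R q T' ≤ omegaSec n R q T := by
  rintro ω ⟨ha, hb, hc, hd⟩
  exact ⟨fun s => sec_mono n R h 0 (ha s), hb, hc, hd⟩

/-- Čech `p`-cochains of `Ω^q(q) = Λ^q(Ω_{ℙ^n}(1))` with respect to the standard affine
cover of `ℙ^n_R`. -/
abbrev CochainOmega (q : ℕ) (p : ℕ) : Type :=
  (t : Fin (p + 1) ↪o Fin (n + 1)) → omegaSec n R q (Set.range t)

/-- The Čech differential for `Ω^q(q)`. -/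
def cechDOmega (q : ℕ) (p : ℕ) : CochainOmega n R q p →ₗ[R] CochainOmega n R q (p + 1) where
  toFun ω t := ∑ j : Fin (p + 2), ((-1 : ℤ) ^ (j : ℕ)) •
    (Submodule.inclusion (omegaSec_mono n R q (range_face_subset n t j)))
      (ω ((Fin.succAboveOrderEmb j).trans t))
  map_add' ω ω' := by
    funext t
    simp only [Pi.add_apply]
    rw [← Finset.sum_add_distrib]
    exact Finset.sum_congr rfl fun j _ => by rw [← smul_add]; rfl
  map_smul' r ω := by
    funext t
    simp only [map_smul, RingHom.id_apply, Pi.smul_apply, Finset.smul_sum]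
    congr 1
    funext j
    rw [smul_comm]

/-- The coboundaries (zero in degree 0). -/
def coboundaryOmega (q : ℕ) : (i : ℕ) → Submodule R (CochainOmega n R q i)
  | 0 => ⊥
  | (m + 1) => LinearMap.range (cechDOmega n R q m)

/-- The Čech cohomology `H^p(ℙ^n_R, Ω^q(q)) = H^p(ℙ^n_R, Λ^q(Ω(1)))` with respect to
the standard affine cover: cocycles modulo coboundaries.  For `q = 0` this is
`H^p(ℙ^n_R, O)`. -/
abbrev cohomologyOmega (q : ℕ) (p : ℕ) : Type :=
  ↥((LinearMap.ker (cechDOmega n R q p)).map (coboundaryOmega n R q p).mkQ)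

end CechProj
end

noncomputable section
namespace CechProj
open Finset

variable (n : ℕ) (R : Type) [CommRing R]

/-- View a Laurent polynomial as a finitely supported function. -/
def co (x : Laurent n R) : (Fin (n + 1) → ℤ) →₀ R := x.coeff

@[simp] lemma co_single (e : Fin (n+1) → ℤ) (r : R) :
    co n R (AddMonoidAlgebra.single e r) = Finsupp.single e r := rfl

@[simp] lemma co_zero : co n R 0 = 0 := rfl
@[simp] lemma co_add (x y : Laurent n R) : co n R (x + y) = co n R x + co n R y := rfl
@[simp] lemma co_smul (r : R) (x : Laurent n R) : co n R (r • x) = r • co n R x := rfl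
@[simp] lemma co_zsmul (z : ℤ) (x : Laurent n R) : co n R (z • x) = z • co n R x := rfl

lemma mem_sec_iff {T : Set (Fin (n + 1))} {d : ℤ} {x : Laurent n R} :
    x ∈ sec n R T d ↔
      ∀ e ∈ (co n R x).support, (∑ i, e i) = d ∧ ∀ i ∉ T, 0 ≤ e i := by
  constructor
  · intro hx
    induction hx using Submodule.span_induction with
    | mem x hx =>
      obtain ⟨e, h1, h2, rfl⟩ := hx
      intro e' he'
      have := Finsupp.support_single_subset (a := e) (b := (1:R)) he'
      simp only [Finset.mem_singleton] at this
      subst this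
      exact ⟨h1, h2⟩
    | zero => simp
    | add x y _ _ hx hy =>
      intro e he
      rcases Finset.mem_union.1 (Finsupp.support_add (co_add n R x y ▸ he)) with h | h
      · exact hx e h
      · exact hy e h
    | smul r x _ hx =>
      intro e he
      exact hx e (Finsupp.support_smul (co_smul n R r x ▸ he))
  · intro h
    have hx : x = ∑ e ∈ (co n R x).support, AddMonoidAlgebra.single e ((co n R x) e) := by
      conv_lhs => rw [show x = (co n R x).sum AddMonoidAlgebra.single from (AddMonoidAlgebra.sum_coeff_single x).symm]
      rfl
    rw [hx]
    refine Submodule.sum_mem _ (fun e he => ?_)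
    have : (AddMonoidAlgebra.single e ((co n R x) e) : Laurent n R) = ((co n R x) e) • AddMonoidAlgebra.single e (1:R) := by
      rw [AddMonoidAlgebra.smul_single, smul_eq_mul, mul_one]
    rw [this]
    exact Submodule.smul_mem _ _ (Submodule.subset_span ⟨e, (h e he).1, (h e he).2, rfl⟩)

lemma coeff_eq_zero_of_sum_ne {T : Set (Fin (n + 1))} {d : ℤ} {x : Laurent n R}
    (hx : x ∈ sec n R T d) {e : Fin (n+1) → ℤ} (he : (∑ i, e i) ≠ d) :
    co n R x e = 0 := by
  by_contra h
  exact he (((mem_sec_iff n R).1 hx e (Finsupp.mem_support_iff.2 h)).1)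

lemma coeff_nonneg_off {T : Set (Fin (n + 1))} {d : ℤ} {x : Laurent n R}
    (hx : x ∈ sec n R T d) {e : Fin (n+1) → ℤ} {i : Fin (n+1)} (hi : i ∉ T)
    (hneg : e i < 0) : co n R x e = 0 := by
  by_contra h
  exact absurd (((mem_sec_iff n R).1 hx e (Finsupp.mem_support_iff.2 h)).2 i hi)
    (not_le.2 hneg)

/-- The multiplicity function of a tuple of indices. -/
def chi {q : ℕ} (s : Fin q → Fin (n + 1)) : Fin (n + 1) → ℤ :=
  fun i => ∑ j, if s j = i then 1 else 0

lemma chi_comp_perm {q : ℕ} (s : Fin q → Fin (n + 1)) (σ : Equiv.Perm (Fin q)) :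
    chi n (s ∘ σ) = chi n s := by
  funext i
  exact Equiv.sum_comp σ (fun j => if s j = i then (1:ℤ) else 0)

lemma sum_chi {q : ℕ} (s : Fin q → Fin (n + 1)) : (∑ i, chi n s i) = q := by
  unfold chi
  rw [Finset.sum_comm]
  simp [Finset.sum_ite_eq]

lemma chi_nonneg {q : ℕ} (s : Fin q → Fin (n + 1)) (i : Fin (n+1)) : 0 ≤ chi n s i :=
  Finset.sum_nonneg (fun j _ => by positivity)

lemma chi_cons {m : ℕ} (i₀ : Fin (n + 1)) (s' : Fin m → Fin (n + 1)) :
    chi n (Fin.cons i₀ s') = Pi.single i₀ 1 + chi n s' := by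
  funext i
  simp only [chi, Pi.add_apply, Fin.sum_univ_succ, Fin.cons_zero, Fin.cons_succ]
  congr 1
  rw [Pi.single_apply]
  exact if_congr eq_comm rfl rfl

lemma chi_le_one {q : ℕ} {s : Fin q → Fin (n + 1)} (hs : Function.Injective s)
    (i : Fin (n+1)) : chi n s i ≤ 1 := by
  unfold chi
  by_cases h : ∃ j, s j = i
  · obtain ⟨j₀, hj₀⟩ := h
    have : ∀ j, (if s j = i then (1:ℤ) else 0) = if j = j₀ then 1 else 0 := by
      intro j
      by_cases hj : j = j₀
      · subst hj; simp [hj₀]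
      · have : s j ≠ i := fun hc => hj (hs (hc.trans hj₀.symm))
        simp [this, hj]
    rw [Finset.sum_congr rfl (fun j _ => this j)]
    simp
  · push_neg at h
    rw [Finset.sum_congr rfl (fun j _ => if_neg (h j))]
    simp

lemma chi_zero_of_q_zero (s : Fin 0 → Fin (n + 1)) (i : Fin (n+1)) : chi n s i = 0 := by
  simp [chi]

lemma chi_pos_of_mem {q : ℕ} {s : Fin q → Fin (n + 1)} {j : Fin q} {i : Fin (n+1)}
    (h : s j = i) : 1 ≤ chi n s i := by
  unfold chi
  have := Finset.single_le_sum (f := fun j => if s j = i then (1:ℤ) else 0)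
    (fun j _ => by positivity) (Finset.mem_univ j)
  simpa [h] using this

end CechProj
end
noncomputable section
namespace CechProj
open Finset

variable (n : ℕ) (R : Type) [CommRing R]

@[simp] lemma X_eq (i : Fin (n+1)) :
    X n R i = AddMonoidAlgebra.single (Pi.single i (1:ℤ)) (1:R) := rfl

/-- Weight-`w` component of a `q`-tuple-indexed family of Laurent polynomials. -/
def wcompFun (w : Fin (n + 1) → ℤ) {q : ℕ}
    (x : (Fin q → Fin (n + 1)) → Laurent n R) :
    (Fin q → Fin (n + 1)) → Laurent n R :=
  fun s => AddMonoidAlgebra.single (w - chi n s) (co n R (x s) (w - chi n s))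

lemma wcompFun_add (w : Fin (n + 1) → ℤ) {q : ℕ}
    (x y : (Fin q → Fin (n + 1)) → Laurent n R) :
    wcompFun n R w (x + y) = wcompFun n R w x + wcompFun n R w y := by
  funext s
  simp [wcompFun, AddMonoidAlgebra.single_add]

lemma wcompFun_zsmul (w : Fin (n + 1) → ℤ) {q : ℕ} (z : ℤ)
    (x : (Fin q → Fin (n + 1)) → Laurent n R) :
    wcompFun n R w (z • x) = z • wcompFun n R w x := by
  funext s
  show (AddMonoidAlgebra.single _ _ : Laurent n R) = z • (AddMonoidAlgebra.single _ _ : Laurent n R)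
  rw [AddMonoidAlgebra.smul_single]
  congr 1

lemma wcompFun_zero (w : Fin (n + 1) → ℤ) {q : ℕ} :
    wcompFun n R w (0 : (Fin q → Fin (n + 1)) → Laurent n R) = 0 := by
  funext s; simp [wcompFun]

/-- Multiplying by `X i` shifts coefficients. -/
lemma X_mul_coeff (i : Fin (n+1)) (y : Laurent n R) (f : Fin (n+1) → ℤ) :
    co n R (X n R i * y) f = co n R y (f - Pi.single i 1) := by
  have h := AddMonoidAlgebra.coeff_single_mul_apply y (1:R) (Pi.single i (1:ℤ)) f
  rw [one_mul] at h
  rw [show f - Pi.single i 1 = -Pi.single i 1 + f by abel]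
  exact h

lemma wcompFun_mem (w : Fin (n + 1) → ℤ) {q : ℕ} {T : Set (Fin (n+1))}
    {x : (Fin q → Fin (n + 1)) → Laurent n R} (hx : x ∈ omegaSec n R q T) :
    wcompFun n R w x ∈ omegaSec n R q T := by
  obtain ⟨ha, hb, hc, hd⟩ := hx
  refine ⟨?_, ?_, ?_, ?_⟩
  · intro s
    rw [mem_sec_iff]
    intro e he
    simp only [wcompFun, co_single] at he
    rw [Finsupp.mem_support_single] at he
    obtain ⟨rfl, hb0⟩ := he
    exact (mem_sec_iff n R).1 (ha s) _ (Finsupp.mem_support_iff.2 hb0)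
  · intro s σ
    show (AddMonoidAlgebra.single _ _ : Laurent n R) = _ • (AddMonoidAlgebra.single _ _ : Laurent n R)
    rw [chi_comp_perm, AddMonoidAlgebra.smul_single]
    congr 1
    rw [hb s σ]
    rfl
  · intro s hs
    show (AddMonoidAlgebra.single _ _ : Laurent n R) = 0
    rw [hc s hs]
    simp
  · intro m h s'
    subst h
    have key : ∀ i : Fin (n+1),
        X n R i * wcompFun n R w x (fun j => (Fin.cons i s' : Fin (m+1) → Fin (n+1)) (Fin.cast rfl j))
        = AddMonoidAlgebra.single (w - chi n s')
            (co n R (x (fun j => (Fin.cons i s' : Fin (m+1) → Fin (n+1)) (Fin.cast rfl j)))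
              (w - chi n s' - Pi.single i 1)) := by
      intro i
      have hcast : (fun j => (Fin.cons i s' : Fin (m+1) → Fin (n+1)) (Fin.cast rfl j))
          = Fin.cons i s' := by
        funext j; rfl
      have harg : w - chi n (Fin.cons i s') = w - chi n s' - Pi.single i 1 := by
        rw [chi_cons]; abel
      simp only [wcompFun, hcast, harg]
      rw [X_eq, AddMonoidAlgebra.single_mul_single, one_mul]
      congr 1
      abel
    rw [Finset.sum_congr rfl (fun i _ => key i)]
    have h0 : (∑ i : Fin (n+1),
        co n R (x (fun j => (Fin.cons i s' : Fin (m+1) → Fin (n+1)) (Fin.cast rfl j)))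
          (w - chi n s' - Pi.single i 1)) = 0 := by
      have h2 := DFunLike.congr_fun (congrArg (co n R) (hd m rfl s')) (w - chi n s')
      simp only [co_zero, Finsupp.coe_zero, Pi.zero_apply] at h2
      rw [show co n R (∑ i : Fin (n+1), X n R i *
          x (fun j => (Fin.cons i s' : Fin (m+1) → Fin (n+1)) (Fin.cast rfl j)))
          = ∑ i : Fin (n+1), co n R (X n R i *
          x (fun j => (Fin.cons i s' : Fin (m+1) → Fin (n+1)) (Fin.cast rfl j))) from AddMonoidAlgebra.coeff_sum _ _] at h2
      rw [Finsupp.finset_sum_apply] at h2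
      rw [← h2]
      exact Finset.sum_congr rfl (fun i _ => (X_mul_coeff n R i _ _).symm)
    ext g
    rw [AddMonoidAlgebra.coeff_sum, Finsupp.finset_sum_apply]
    by_cases hg : w - chi n s' = g
    · subst hg
      simp only [AddMonoidAlgebra.coeff_single, Finsupp.single_apply, if_pos rfl]
      simpa using h0
    · simp [AddMonoidAlgebra.coeff_single, Finsupp.single_apply, hg]

/-- The weight-`w` projection of cochains. -/
def piW (w : Fin (n + 1) → ℤ) {q p : ℕ} (ω : CochainOmega n R q p) :
    CochainOmega n R q p :=
  fun t => ⟨wcompFun n R w (ω t : (Fin q → Fin (n+1)) → Laurent n R),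
    wcompFun_mem n R w (ω t).2⟩

lemma d_coe {q p : ℕ} (ω : CochainOmega n R q p) (t : Fin (p + 2) ↪o Fin (n + 1)) :
    ((cechDOmega n R q p ω t : (Fin q → Fin (n+1)) → Laurent n R)) =
      ∑ j : Fin (p + 2), ((-1 : ℤ) ^ (j : ℕ)) •
        ((ω ((Fin.succAboveOrderEmb j).trans t) : (Fin q → Fin (n+1)) → Laurent n R)) := by
  show ((∑ j : Fin (p+2), _ : ↥(omegaSec n R q (Set.range t))) : (Fin q → Fin (n+1)) → Laurent n R) = _
  rw [Submodule.coe_sum]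
  refine Finset.sum_congr rfl (fun j _ => ?_)
  rw [AddSubgroupClass.coe_zsmul]
  rfl

lemma piW_d (w : Fin (n + 1) → ℤ) {q p : ℕ} (ω : CochainOmega n R q p) :
    piW n R w (cechDOmega n R q p ω) = cechDOmega n R q p (piW n R w ω) := by
  funext t
  apply Subtype.ext
  show wcompFun n R w ((cechDOmega n R q p ω t : (Fin q → Fin (n+1)) → Laurent n R)) = _
  rw [d_coe, d_coe]
  rw [show (∑ j : Fin (p + 2), ((-1 : ℤ) ^ (j : ℕ)) •
        ((piW n R w ω ((Fin.succAboveOrderEmb j).trans t) : (Fin q → Fin (n+1)) → Laurent n R)))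
      = ∑ j : Fin (p + 2), ((-1 : ℤ) ^ (j : ℕ)) •
        wcompFun n R w ((ω ((Fin.succAboveOrderEmb j).trans t) : (Fin q → Fin (n+1)) → Laurent n R))
      from rfl]
  induction (Finset.univ : Finset (Fin (p+2))) using Finset.induction with
  | empty => simp [wcompFun_zero]
  | insert _ _ hj ih =>
    rw [Finset.sum_insert hj, Finset.sum_insert hj, wcompFun_add, wcompFun_zsmul, ih]

end CechProj
end
noncomputable section
namespace CechProj
open Finset

variable (n : ℕ)

/-- Number of elements of `A` below `a`. -/
def cnt (A : Finset (Fin (n + 1))) (a : Fin (n + 1)) : ℕ := (A.filter (· < a)).card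

variable {M : Type} [AddCommGroup M]

/-- The Čech differential in the Finset model. -/
def Dfin (c : Finset (Fin (n + 1)) → M) (A : Finset (Fin (n + 1))) : M :=
  ∑ a ∈ A, ((-1 : ℤ) ^ cnt n A a) • c (A.erase a)

/-- The cone homotopy with apex `v` in the Finset model. -/
def Hfin (v : Fin (n + 1)) (c : Finset (Fin (n + 1)) → M) (A : Finset (Fin (n + 1))) : M :=
  if v ∈ A then 0 else ((-1 : ℤ) ^ cnt n (insert v A) v) • c (insert v A)

lemma cnt_insert_self (v : Fin (n+1)) (A : Finset (Fin (n+1))) :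
    cnt n (insert v A) v = cnt n A v := by
  unfold cnt
  rw [Finset.filter_insert, if_neg (lt_irrefl v)]

lemma cnt_insert_of_mem {v a : Fin (n+1)} (A : Finset (Fin (n+1))) (hv : v ∉ A) (ha : a ∈ A) :
    cnt n (insert v A) a = cnt n A a + (if v < a then 1 else 0) := by
  unfold cnt
  rw [Finset.filter_insert]
  by_cases h : v < a
  · rw [if_pos h, Finset.card_insert_of_notMem (fun hc => hv (Finset.mem_of_mem_filter _ hc)),
      if_pos h, Nat.add_comm]
  · rw [if_neg h, if_neg h]
    omega

lemma cnt_erase (v : Fin (n+1)) {a : Fin (n+1)} {A : Finset (Fin (n+1))} (ha : a ∈ A) :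
    cnt n A v = cnt n (A.erase a) v + (if a < v then 1 else 0) := by
  unfold cnt
  conv_lhs => rw [← Finset.insert_erase ha]
  rw [Finset.filter_insert]
  by_cases h : a < v
  · rw [if_pos h, if_pos h,
      Finset.card_insert_of_notMem
        (fun hc => (Finset.notMem_erase a A) (Finset.mem_of_mem_filter _ hc)), Nat.add_comm]
  · rw [if_neg h, if_neg h]
    omega

lemma cone_identity (v : Fin (n+1)) (c : Finset (Fin (n + 1)) → M) (A : Finset (Fin (n+1))) :
    Dfin n (Hfin n v c) A + Hfin n v (Dfin n c) A = c A := by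
  by_cases hv : v ∈ A
  · -- apex already in `A`
    rw [Hfin, if_pos hv, add_zero, Dfin]
    rw [Finset.sum_eq_single_of_mem v hv
      (fun a ha hne => by
        rw [Hfin, if_pos (Finset.mem_erase.2 ⟨Ne.symm hne, hv⟩), smul_zero])]
    rw [Hfin, if_neg (Finset.notMem_erase v A), Finset.insert_erase hv, smul_smul, ← pow_add,
      Even.neg_one_pow ⟨cnt n A v, rfl⟩, one_smul]
  · -- apex not in `A`
    have e1 : Dfin n (Hfin n v c) A =
        ∑ a ∈ A, ((-1:ℤ) ^ (cnt n A a + cnt n (A.erase a) v)) • c ((insert v A).erase a) := by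
      rw [Dfin]
      refine Finset.sum_congr rfl (fun a ha => ?_)
      have hva : v ∉ A.erase a := fun h => hv (Finset.mem_of_mem_erase h)
      have hne : v ≠ a := fun h => hv (h ▸ ha)
      rw [Hfin, if_neg hva, cnt_insert_self, smul_smul, ← pow_add,
        ← Finset.erase_insert_of_ne hne]
    have e2 : Hfin n v (Dfin n c) A = c A +
        ∑ a ∈ A, ((-1:ℤ) ^ (cnt n A v + cnt n (insert v A) a)) • c ((insert v A).erase a) := by
      rw [Hfin, if_neg hv, Dfin, Finset.sum_insert hv, Finset.erase_insert hv, cnt_insert_self,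
        smul_add, smul_smul, ← pow_add, Even.neg_one_pow ⟨cnt n A v, rfl⟩, one_smul,
        Finset.smul_sum]
      congr 1
      exact Finset.sum_congr rfl (fun a ha => by rw [smul_smul, ← pow_add])
    rw [e1, e2]
    have hz : ∀ a ∈ A,
        ((-1:ℤ) ^ (cnt n A a + cnt n (A.erase a) v)) • c ((insert v A).erase a) +
        ((-1:ℤ) ^ (cnt n A v + cnt n (insert v A) a)) • c ((insert v A).erase a) = 0 := by
      intro a ha
      have hva : v ≠ a := fun h => hv (h ▸ ha)
      rw [← add_smul, ← zero_smul ℤ (c ((insert v A).erase a))]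
      congr 1
      rw [cnt_insert_of_mem n A hv ha, cnt_erase n v ha]
      rcases lt_or_gt_of_ne hva with h | h
      · rw [if_pos h, if_neg (asymm h)]
        simp [pow_add, pow_succ]
        ring
      · rw [if_neg (asymm h), if_pos h]
        simp [pow_add, pow_succ]
        ring
    calc (∑ a ∈ A, ((-1:ℤ) ^ (cnt n A a + cnt n (A.erase a) v)) • c ((insert v A).erase a)) +
        (c A + ∑ a ∈ A, ((-1:ℤ) ^ (cnt n A v + cnt n (insert v A) a)) • c ((insert v A).erase a))
        = ((∑ a ∈ A, (((-1:ℤ) ^ (cnt n A a + cnt n (A.erase a) v)) • c ((insert v A).erase a) +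
            ((-1:ℤ) ^ (cnt n A v + cnt n (insert v A) a)) • c ((insert v A).erase a)))) + c A := by
          rw [Finset.sum_add_distrib]; abel
      _ = c A := by rw [Finset.sum_congr rfl hz]; simp

end CechProj
end
noncomputable section
namespace CechProj
open Finset

noncomputable instance {a b : ℕ} : Fintype (Fin a ↪o Fin b) :=
  Fintype.ofInjective (fun t => (t : Fin a → Fin b)) (fun _ _ h => DFunLike.coe_injective h)

variable (n : ℕ) (R : Type) [CommRing R]

/-- The range of an order embedding, as a `Finset`. -/
def rset {p : ℕ} (t : Fin p ↪o Fin (n + 1)) : Finset (Fin (n + 1)) :=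
  Finset.univ.image t

lemma mem_rset {p : ℕ} {t : Fin p ↪o Fin (n + 1)} {a : Fin (n+1)} :
    a ∈ rset n t ↔ ∃ j, t j = a := by
  simp [rset]

lemma rset_card {p : ℕ} (t : Fin p ↪o Fin (n + 1)) : (rset n t).card = p := by
  rw [rset, Finset.card_image_of_injective _ t.injective, Finset.card_univ, Fintype.card_fin]

lemma coe_rset {p : ℕ} (t : Fin p ↪o Fin (n + 1)) :
    ((rset n t : Finset (Fin (n+1))) : Set (Fin (n+1))) = Set.range t := by
  simp [rset]

lemma orderEmbOfFin_rset {p : ℕ} (t : Fin p ↪o Fin (n + 1)) :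
    (rset n t).orderEmbOfFin (rset_card n t) = t := by
  apply DFunLike.coe_injective
  exact (Finset.orderEmbOfFin_unique (rset_card n t)
    (fun x => mem_rset n |>.2 ⟨x, rfl⟩) t.strictMono).symm

lemma cnt_rset {p : ℕ} (t : Fin p ↪o Fin (n + 1)) (j : Fin p) :
    cnt n (rset n t) (t j) = (j : ℕ) := by
  unfold cnt rset
  rw [Finset.filter_image]
  rw [Finset.card_image_of_injective _ t.injective]
  have : Finset.filter (fun i => t i < t j) Finset.univ
      = Finset.filter (fun i => i < j) Finset.univ := by
    refine Finset.filter_congr (fun i _ => ?_)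
    simp [t.lt_iff_lt]
  rw [show Finset.filter (fun a => t a < t j) Finset.univ
      = Finset.filter (fun i => i < j) Finset.univ from this,
    Finset.filter_gt_eq_Iio, Fin.card_Iio]

/-- The `j`-th face of `t`. -/
lemma rset_face {m : ℕ} (t : Fin (m + 2) ↪o Fin (n + 1)) (j : Fin (m + 2)) :
    rset n ((Fin.succAboveOrderEmb j).trans t) = (rset n t).erase (t j) := by
  ext a
  rw [mem_rset, Finset.mem_erase, mem_rset]
  constructor
  · rintro ⟨i, rfl⟩
    exact ⟨fun h => Fin.succAbove_ne j i (t.injective h), ⟨_, rfl⟩⟩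
  · rintro ⟨hne, i, rfl⟩
    obtain ⟨z, hz⟩ := Fin.exists_succAbove_eq (fun h : i = j => hne (by rw [h]))
    exact ⟨z, by rw [show ((Fin.succAboveOrderEmb j).trans t) z = t (j.succAbove z) from rfl, hz]⟩

lemma rset_face_card {m : ℕ} (t : Fin (m + 2) ↪o Fin (n + 1)) (j : Fin (m + 2)) :
    ((rset n t).erase (t j)).card = m + 1 := by
  rw [Finset.card_erase_of_mem (mem_rset n |>.2 ⟨j, rfl⟩), rset_card]
  omega

lemma face_eq_orderEmbOfFin {m : ℕ} (t : Fin (m + 2) ↪o Fin (n + 1)) (j : Fin (m + 2)) :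
    (Fin.succAboveOrderEmb j).trans t
      = ((rset n t).erase (t j)).orderEmbOfFin (rset_face_card n t j) := by
  apply DFunLike.coe_injective
  refine Finset.orderEmbOfFin_unique (rset_face_card n t j) (fun x => ?_) ?_
  · rw [← rset_face]
    exact mem_rset n |>.2 ⟨x, rfl⟩
  · exact t.strictMono.comp (Fin.strictMono_succAbove j)

/-- Cochains in the Finset model. -/
def Fn {q : ℕ} (m : ℕ) (ω : CochainOmega n R q m) :
    Finset (Fin (n + 1)) → ((Fin q → Fin (n + 1)) → Laurent n R) :=
  fun A => if h : A.card = m + 1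
    then ((ω (A.orderEmbOfFin h)) : (Fin q → Fin (n + 1)) → Laurent n R) else 0

lemma Fn_card_ne {q : ℕ} (m : ℕ) (ω : CochainOmega n R q m) {A : Finset (Fin (n+1))}
    (h : A.card ≠ m + 1) : Fn n R m ω A = 0 := by
  rw [Fn, dif_neg h]

lemma Fn_rset {q m : ℕ} (ω : CochainOmega n R q m) (t : Fin (m + 1) ↪o Fin (n + 1)) :
    Fn n R m ω (rset n t) = (ω t : (Fin q → Fin (n + 1)) → Laurent n R) := by
  rw [Fn, dif_pos (rset_card n t), orderEmbOfFin_rset]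

lemma d_fin {q m : ℕ} (ω : CochainOmega n R q m) (t : Fin (m + 2) ↪o Fin (n + 1)) :
    ((cechDOmega n R q m ω t : (Fin q → Fin (n + 1)) → Laurent n R))
      = Dfin n (Fn n R m ω) (rset n t) := by
  rw [d_coe, Dfin]
  rw [show rset n t = Finset.univ.image ⇑t from rfl]
  rw [Finset.sum_image (fun i _ j _ h => t.injective h)]
  refine Finset.sum_congr rfl (fun j _ => ?_)
  have h1 : cnt n (Finset.univ.image ⇑t) (t j) = (j : ℕ) := cnt_rset n t j
  rw [h1]
  congr 1
  have h2 : (Finset.univ.image ⇑t).erase (t j) = rset n ((Fin.succAboveOrderEmb j).trans t) :=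
    (rset_face n t j).symm
  rw [h2, Fn_rset]

end CechProj
end
noncomputable section
namespace CechProj
open Finset

variable (n : ℕ) (R : Type) [CommRing R]

lemma rset_orderEmbOfFin {p : ℕ} (A : Finset (Fin (n+1))) (h : A.card = p) :
    rset n (A.orderEmbOfFin h) = A := by
  apply Finset.coe_injective
  rw [coe_rset, Finset.range_orderEmbOfFin]

lemma pure_shrink {q : ℕ} (w : Fin (n+1) → ℤ) {v : Fin (n+1)}
    (hv : ∀ s : Fin q → Fin (n+1), Function.Injective s → chi n s v ≤ w v)
    {T T' : Set (Fin (n+1))} (hsub : ∀ i ∈ T, i = v ∨ i ∈ T')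
    {x : (Fin q → Fin (n+1)) → Laurent n R} (hx : x ∈ omegaSec n R q T) :
    wcompFun n R w x ∈ omegaSec n R q T' := by
  obtain ⟨ha, hb, hc, hd⟩ := wcompFun_mem n R w hx
  refine ⟨?_, hb, hc, hd⟩
  intro s
  rw [mem_sec_iff]
  intro e he
  have h1 := (mem_sec_iff n R).1 (ha s) e he
  refine ⟨h1.1, fun i hi => ?_⟩
  by_cases hiT : i ∈ T
  · rcases hsub i hiT with rfl | h
    · simp only [wcompFun, co_single] at he
      rw [Finsupp.mem_support_single] at he
      obtain ⟨rfl, hb0⟩ := he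
      have hinj : Function.Injective s := by
        by_contra hninj
        exact hb0 (by rw [hx.2.2.1 s hninj]; rfl)
      have := hv s hinj
      simp only [Pi.sub_apply]
      omega
    · exact (hi h).elim
  · exact h1.2 i hiT

lemma piW_zero (w : Fin (n+1) → ℤ) {q p : ℕ} :
    piW n R w (0 : CochainOmega n R q p) = 0 := by
  funext t
  apply Subtype.ext
  show wcompFun n R w ((0 : CochainOmega n R q p) t : (Fin q → Fin (n+1)) → Laurent n R) = 0
  rw [show ((0 : CochainOmega n R q p) t : (Fin q → Fin (n+1)) → Laurent n R) = 0 from rfl,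
    wcompFun_zero]

set_option maxHeartbeats 1000000 in
lemma weight_piece_in_range {q p : ℕ} (w : Fin (n+1) → ℤ) {v : Fin (n+1)}
    (hv : ∀ s : Fin q → Fin (n+1), Function.Injective s → chi n s v ≤ w v)
    (ω : CochainOmega n R q (p+1)) (hω : cechDOmega n R q (p+1) ω = 0) :
    piW n R w ω ∈ LinearMap.range (cechDOmega n R q p) := by
  classical
  have hmem : ∀ t : Fin (p+1) ↪o Fin (n+1),
      Hfin n v (Fn n R (p+1) (piW n R w ω)) (rset n t) ∈ omegaSec n R q (Set.range t) := by
    intro t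
    by_cases hvt : v ∈ rset n t
    · rw [Hfin, if_pos hvt]; exact Submodule.zero_mem _
    · rw [Hfin, if_neg hvt]
      by_cases hcard : (insert v (rset n t)).card = (p + 1) + 1
      · rw [Fn, dif_pos hcard]
        refine zsmul_mem ?_ _
        refine pure_shrink n R w hv (fun i hi => ?_)
          ((ω ((insert v (rset n t)).orderEmbOfFin hcard)).2)
        have hi' : i ∈ insert v (rset n t) := by
          rw [Finset.range_orderEmbOfFin] at hi
          exact hi
        rcases Finset.mem_insert.1 hi' with rfl | h
        · exact Or.inl rfl
        · obtain ⟨j, hj⟩ := mem_rset n |>.1 h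
          exact Or.inr ⟨j, hj⟩
      · rw [Fn_card_ne n R _ _ hcard, smul_zero]
        exact Submodule.zero_mem _
  refine LinearMap.mem_range.2
    ⟨(fun t => ⟨Hfin n v (Fn n R (p+1) (piW n R w ω)) (rset n t), hmem t⟩ :
      CochainOmega n R q p), ?_⟩
  have hFn : Fn n R p (fun t => ⟨Hfin n v (Fn n R (p+1) (piW n R w ω)) (rset n t), hmem t⟩)
      = Hfin n v (Fn n R (p+1) (piW n R w ω)) := by
    funext A
    by_cases hA : A.card = p + 1
    · rw [Fn, dif_pos hA]
      show Hfin n v (Fn n R (p+1) (piW n R w ω)) (rset n (A.orderEmbOfFin hA)) = _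
      rw [rset_orderEmbOfFin]
    · rw [Fn_card_ne n R _ _ hA, Hfin]
      split_ifs with h
      · rfl
      · rw [Fn_card_ne n R _ _ (by
          rw [Finset.card_insert_of_notMem h]; omega), smul_zero]
  have hωπ : cechDOmega n R q (p+1) (piW n R w ω) = 0 := by
    rw [← piW_d, hω, piW_zero]
  have hD0 : Dfin n (Fn n R (p+1) (piW n R w ω)) = 0 := by
    funext A
    show Dfin n (Fn n R (p+1) (piW n R w ω)) A = 0
    by_cases hA : A.card = (p + 1) + 2
    · have h1 : Dfin n (Fn n R (p+1) (piW n R w ω)) (rset n (A.orderEmbOfFin hA)) =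
          ((cechDOmega n R q (p+1) (piW n R w ω) (A.orderEmbOfFin hA) :
            (Fin q → Fin (n+1)) → Laurent n R)) := (d_fin n R _ _).symm
      rw [rset_orderEmbOfFin] at h1
      rw [h1, hωπ]
      rfl
    · rw [Dfin]
      refine Finset.sum_eq_zero (fun a ha => ?_)
      rw [Fn_card_ne n R _ _ (by
        rw [Finset.card_erase_of_mem ha]
        have : 1 ≤ A.card := Finset.card_pos.2 ⟨a, ha⟩
        omega), smul_zero]
  funext t
  apply Subtype.ext
  calc ((cechDOmega n R q p
        (fun t => ⟨Hfin n v (Fn n R (p+1) (piW n R w ω)) (rset n t), hmem t⟩) t :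
          (Fin q → Fin (n+1)) → Laurent n R))
      = Dfin n (Fn n R p
          (fun t => ⟨Hfin n v (Fn n R (p+1) (piW n R w ω)) (rset n t), hmem t⟩)) (rset n t) :=
        d_fin n R _ t
    _ = Dfin n (Hfin n v (Fn n R (p+1) (piW n R w ω))) (rset n t) := by rw [hFn]
    _ = Fn n R (p+1) (piW n R w ω) (rset n t)
        - Hfin n v (Dfin n (Fn n R (p+1) (piW n R w ω))) (rset n t) := by
        rw [← cone_identity n v (Fn n R (p+1) (piW n R w ω)) (rset n t)]; abel
    _ = Fn n R (p+1) (piW n R w ω) (rset n t) := by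
        rw [hD0, Hfin]
        split_ifs
        · simp
        · rw [Pi.zero_apply, smul_zero, sub_zero]
    _ = ((piW n R w ω t : (Fin q → Fin (n+1)) → Laurent n R)) := Fn_rset n R _ t
end CechProj
end
noncomputable section
namespace CechProj
open Finset

variable (n : ℕ) (R : Type) [CommRing R]

/-- The vertex embedding. -/
def vert (a : Fin (n+1)) : Fin 1 ↪o Fin (n+1) :=
  OrderEmbedding.ofStrictMono (fun _ => a)
    (fun i j hij => absurd (Subsingleton.elim i j ▸ hij) (lt_irrefl j))

@[simp] lemma vert_apply (a : Fin (n+1)) (i : Fin 1) : vert n a i = a := rfl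

lemma range_vert (a : Fin (n+1)) : Set.range (vert n a) = {a} := Set.range_const

lemma eq_vert (t : Fin 1 ↪o Fin (n+1)) : t = vert n (t 0) := by
  apply DFunLike.coe_injective
  funext i
  rw [Subsingleton.elim i 0]
  rfl

/-- The edge embedding. -/
def pairEmb {a b : Fin (n+1)} (hab : a < b) : Fin 2 ↪o Fin (n+1) :=
  OrderEmbedding.ofStrictMono (fun i => if i = 0 then a else b)
    (by
      intro i j hij
      fin_cases i <;> fin_cases j <;>
        first
          | exact absurd hij (lt_irrefl _)
          | simpa using hab
          | exact absurd hij (by decide))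

lemma pair_face0 {a b : Fin (n+1)} (hab : a < b) :
    (Fin.succAboveOrderEmb (0 : Fin 2)).trans (pairEmb n hab) = vert n b := by
  apply DFunLike.coe_injective
  funext i
  rw [Subsingleton.elim i 0]
  show pairEmb n hab ((0 : Fin 2).succAbove 0) = b
  rw [show (0 : Fin 2).succAbove 0 = 1 from rfl]
  rfl

lemma pair_face1 {a b : Fin (n+1)} (hab : a < b) :
    (Fin.succAboveOrderEmb (1 : Fin 2)).trans (pairEmb n hab) = vert n a := by
  apply DFunLike.coe_injective
  funext i
  rw [Subsingleton.elim i 0]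
  show pairEmb n hab ((1 : Fin 2).succAbove 0) = a
  rw [show (1 : Fin 2).succAbove 0 = 0 from rfl]
  rfl

lemma const_of_cocycle {q : ℕ} (ω : CochainOmega n R q 0)
    (hω : cechDOmega n R q 0 ω = 0) (a b : Fin (n+1)) :
    ((ω (vert n a) : (Fin q → Fin (n+1)) → Laurent n R))
      = ((ω (vert n b) : (Fin q → Fin (n+1)) → Laurent n R)) := by
  have key : ∀ {a b : Fin (n+1)} (hab : a < b),
      ((ω (vert n b) : (Fin q → Fin (n+1)) → Laurent n R))
        = ((ω (vert n a) : (Fin q → Fin (n+1)) → Laurent n R)) := by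
    intro a b hab
    have h1 : ((cechDOmega n R q 0 ω (pairEmb n hab) :
        (Fin q → Fin (n+1)) → Laurent n R)) = 0 := by
      rw [congrFun hω (pairEmb n hab)]
      rfl
    rw [d_coe, Fin.sum_univ_two] at h1
    rw [pair_face0 n hab, pair_face1 n hab] at h1
    have h2 : ((ω (vert n b) : (Fin q → Fin (n+1)) → Laurent n R))
        - ((ω (vert n a) : (Fin q → Fin (n+1)) → Laurent n R)) = 0 := by
      simpa [sub_eq_add_neg] using h1
    have := sub_eq_zero.1 h2
    exact this
  rcases lt_trichotomy a b with h | h | h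
  · exact (key h).symm
  · rw [h]
  · exact key h

set_option maxHeartbeats 1000000 in
lemma weight_zero_piece {q : ℕ} (hq : 1 ≤ q) (hn : 1 ≤ n) (w : Fin (n+1) → ℤ)
    (hw : (∑ i, w i) = (q : ℤ))
    (ω : CochainOmega n R q 0) (hω : cechDOmega n R q 0 ω = 0) :
    piW n R w ω = 0 := by
  obtain ⟨m, rfl⟩ : ∃ m, q = m + 1 := ⟨q - 1, by omega⟩
  funext t
  apply Subtype.ext
  funext s
  show AddMonoidAlgebra.single (w - chi n s)
      (co n R ((ω t : (Fin (m+1) → Fin (n+1)) → Laurent n R) s) (w - chi n s))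
    = (0 : Laurent n R)
  rw [eq_vert n t]
  set a := t 0 with ha
  suffices h : co n R ((ω (vert n a) : (Fin (m+1) → Fin (n+1)) → Laurent n R) s)
      (w - chi n s) = 0 by
    rw [h, AddMonoidAlgebra.single_zero]
  by_cases hinj : Function.Injective s
  swap
  · rw [(ω (vert n a)).2.2.2.1 s hinj]
    rfl
  by_cases he : w - chi n s = 0
  · -- Euler relation case
    have hwchi : w = chi n s := sub_eq_zero.1 he
    set v' := s 0 with hv'
    rw [show ((ω (vert n a) : (Fin (m+1) → Fin (n+1)) → Laurent n R))
        = ((ω (vert n v') : (Fin (m+1) → Fin (n+1)) → Laurent n R))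
      from const_of_cocycle n R ω hω a v']
    have E := (ω (vert n v')).2.2.2.2 m rfl (Fin.tail s)
    have E2 := DFunLike.congr_fun (congrArg (co n R) E) (w - chi n (Fin.tail s))
    simp only [co_zero, Finsupp.coe_zero, Pi.zero_apply] at E2
    rw [show co n R (∑ i : Fin (n+1), X n R i *
          (ω (vert n v') : (Fin (m+1) → Fin (n+1)) → Laurent n R)
            (fun j => Fin.cons i (Fin.tail s) (Fin.cast rfl j)))
        = ∑ i : Fin (n+1), co n R (X n R i *
          (ω (vert n v') : (Fin (m+1) → Fin (n+1)) → Laurent n R)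
            (fun j => Fin.cons i (Fin.tail s) (Fin.cast rfl j))) from AddMonoidAlgebra.coeff_sum _ _] at E2
    rw [Finsupp.finset_sum_apply] at E2
    have hterm : ∀ i : Fin (n+1), co n R (X n R i *
          (ω (vert n v') : (Fin (m+1) → Fin (n+1)) → Laurent n R)
            (fun j => Fin.cons i (Fin.tail s) (Fin.cast rfl j))) (w - chi n (Fin.tail s))
        = co n R ((ω (vert n v') : (Fin (m+1) → Fin (n+1)) → Laurent n R)
            (Fin.cons i (Fin.tail s))) (w - chi n (Fin.cons i (Fin.tail s))) := by
      intro i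
      have hcast : (fun j => (Fin.cons i (Fin.tail s) : Fin (m+1) → Fin (n+1))
          (Fin.cast rfl j)) = Fin.cons i (Fin.tail s) := by funext j; rfl
      rw [hcast, X_mul_coeff]
      congr 1
      rw [chi_cons]
      abel
    rw [Finset.sum_congr rfl (fun i _ => hterm i)] at E2
    have hs' : chi n s = Pi.single v' 1 + chi n (Fin.tail s) := by
      conv_lhs => rw [← Fin.cons_self_tail s]
      rw [chi_cons, hv']
    have hzero : ∀ i ∈ Finset.univ, i ≠ v' →
        co n R ((ω (vert n v') : (Fin (m+1) → Fin (n+1)) → Laurent n R)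
          (Fin.cons i (Fin.tail s))) (w - chi n (Fin.cons i (Fin.tail s))) = 0 := by
      intro i _ hi
      refine coeff_nonneg_off n R ((ω (vert n v')).2.1 (Fin.cons i (Fin.tail s)))
        (i := i) ?_ ?_
      · rw [range_vert]
        exact fun hmem => hi (Set.mem_singleton_iff.1 hmem)
      · rw [chi_cons, hwchi, hs']
        simp only [Pi.sub_apply, Pi.add_apply]
        rw [Pi.single_eq_of_ne hi, Pi.single_eq_same]
        omega
    rw [Finset.sum_eq_single_of_mem v' (Finset.mem_univ v') hzero] at E2
    rw [show Fin.cons v' (Fin.tail s) = s from by rw [hv']; exact Fin.cons_self_tail s] at E2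
    exact E2
  · -- a negative exponent exists
    have hsum0 : (∑ i, (w - chi n s) i) = 0 := by
      simp only [Pi.sub_apply]
      rw [Finset.sum_sub_distrib, hw, sum_chi, sub_self]
    have hex : ∃ i, (w - chi n s) i < 0 := by
      by_contra hno
      push_neg at hno
      apply he
      funext i
      have := (Finset.sum_eq_zero_iff_of_nonneg (fun i _ => hno i)).1 hsum0 i
        (Finset.mem_univ i)
      simpa using this
    obtain ⟨i, hi⟩ := hex
    obtain ⟨a', ha'⟩ : ∃ a', a' ≠ i :=
      Fintype.exists_ne_of_one_lt_card (by simp; omega) i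
    rw [show ((ω (vert n a) : (Fin (m+1) → Fin (n+1)) → Laurent n R))
        = ((ω (vert n a') : (Fin (m+1) → Fin (n+1)) → Laurent n R))
      from const_of_cocycle n R ω hω a a']
    refine coeff_nonneg_off n R ((ω (vert n a')).2.1 s) ?_ hi
    rw [range_vert]
    exact fun hmem => ha' (Set.mem_singleton_iff.1 hmem).symm

end CechProj
end
noncomputable section
namespace CechProj
open Finset

variable (n : ℕ) (R : Type) [CommRing R]

lemma piW_eq_zero_of_sum_ne {q p : ℕ} (w : Fin (n+1) → ℤ)
    (hw : (∑ i, w i) ≠ (q : ℤ)) (ω : CochainOmega n R q p) :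
    piW n R w ω = 0 := by
  funext t
  apply Subtype.ext
  funext s
  show AddMonoidAlgebra.single (w - chi n s)
      (co n R ((ω t : (Fin q → Fin (n+1)) → Laurent n R) s) (w - chi n s))
    = (0 : Laurent n R)
  rw [coeff_eq_zero_of_sum_ne n R ((ω t).2.1 s) (e := w - chi n s) (by
    simp only [Pi.sub_apply]
    rw [Finset.sum_sub_distrib, sum_chi]
    intro hcon
    exact hw (by omega)), AddMonoidAlgebra.single_zero]

lemma cochain_decomp {q p : ℕ} (ω : CochainOmega n R q p) :
    ∃ S : Finset (Fin (n+1) → ℤ), ω = ∑ w ∈ S, piW n R w ω := by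
  classical
  refine ⟨Finset.univ.biUnion (fun t : Fin (p+1) ↪o Fin (n+1) =>
    Finset.univ.biUnion (fun s : Fin q → Fin (n+1) =>
      (co n R ((ω t : (Fin q → Fin (n+1)) → Laurent n R) s)).support.image
        (· + chi n s))), ?_⟩
  set S := Finset.univ.biUnion (fun t : Fin (p+1) ↪o Fin (n+1) =>
    Finset.univ.biUnion (fun s : Fin q → Fin (n+1) =>
      (co n R ((ω t : (Fin q → Fin (n+1)) → Laurent n R) s)).support.image
        (· + chi n s))) with hSdef
  funext t
  apply Subtype.ext
  funext s
  have hco : (((∑ w ∈ S, piW n R w ω) t : (Fin q → Fin (n+1)) → Laurent n R)) s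
      = ∑ w ∈ S, (AddMonoidAlgebra.single (w - chi n s)
          (co n R ((ω t : (Fin q → Fin (n+1)) → Laurent n R) s) (w - chi n s))
          : Laurent n R) := by
    rw [show ((∑ w ∈ S, piW n R w ω) t) = ∑ w ∈ S, (piW n R w ω t) from
      Finset.sum_apply t S _, Submodule.coe_sum, Finset.sum_apply]
    exact Finset.sum_congr rfl (fun w _ => rfl)
  rw [hco]
  set x : Laurent n R := (ω t : (Fin q → Fin (n+1)) → Laurent n R) s with hx
  have hsub : (co n R x).support ⊆ S.image (· - chi n s) := by
    intro e he
    refine Finset.mem_image.2 ⟨e + chi n s, ?_, by abel⟩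
    rw [hSdef]
    exact Finset.mem_biUnion.2 ⟨t, Finset.mem_univ t,
      Finset.mem_biUnion.2 ⟨s, Finset.mem_univ s, Finset.mem_image.2 ⟨e, he, rfl⟩⟩⟩
  have hinj : ∀ w₁ ∈ S, ∀ w₂ ∈ S, w₁ - chi n s = w₂ - chi n s → w₁ = w₂ := by
    intro w₁ _ w₂ _ h
    have := congrArg (· + chi n s) h
    simpa using this
  calc x = ∑ e ∈ (co n R x).support, (AddMonoidAlgebra.single e (co n R x e) : Laurent n R) := by
        conv_lhs => rw [show x = ((co n R x).sum AddMonoidAlgebra.single : Laurent n R) from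
          (AddMonoidAlgebra.sum_coeff_single x).symm]
        rfl
    _ = ∑ e ∈ S.image (· - chi n s), (AddMonoidAlgebra.single e (co n R x e) : Laurent n R) := by
        refine Finset.sum_subset hsub (fun e _ he => ?_)
        rw [Finsupp.notMem_support_iff.1 he, AddMonoidAlgebra.single_zero]
    _ = ∑ w ∈ S, (AddMonoidAlgebra.single (w - chi n s) (co n R x (w - chi n s)) : Laurent n R) :=
        Finset.sum_image hinj

lemma subsingleton_of_ker_le {q p : ℕ}
    (h : LinearMap.ker (cechDOmega n R q p) ≤ coboundaryOmega n R q p) :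
    Subsingleton (cohomologyOmega n R q p) := by
  constructor
  rintro ⟨x, hx⟩ ⟨y, hy⟩
  obtain ⟨a, ha, rfl⟩ := hx
  obtain ⟨b, hb, rfl⟩ := hy
  apply Subtype.ext
  show (coboundaryOmega n R q p).mkQ a = (coboundaryOmega n R q p).mkQ b
  have ha' : (coboundaryOmega n R q p).mkQ a = 0 := by
    rw [Submodule.mkQ_apply, Submodule.Quotient.mk_eq_zero]
    exact h ha
  have hb' : (coboundaryOmega n R q p).mkQ b = 0 := by
    rw [Submodule.mkQ_apply, Submodule.Quotient.mk_eq_zero]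
    exact h hb
  rw [ha', hb']

lemma ker_le_range {q p : ℕ} (hn : 1 ≤ n) :
    LinearMap.ker (cechDOmega n R q (p+1)) ≤
      LinearMap.range (cechDOmega n R q p) := by
  intro ω hst
  obtain ⟨S, hS⟩ := cochain_decomp n R ω
  rw [hS]
  refine Submodule.sum_mem _ (fun w hw => ?_)
  by_cases hwq : (∑ i, w i) = (q : ℤ)
  · have hex : ∃ v : Fin (n+1), (if q = 0 then 0 else 1) ≤ w v := by
      by_contra hcon
      push_neg at hcon
      have hle : (∑ i, w i) ≤ ∑ _i : Fin (n+1), ((if q = 0 then 0 else 1) - 1) :=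
        Finset.sum_le_sum (fun i _ => by have := hcon i; omega)
      rw [Finset.sum_const, Finset.card_univ, Fintype.card_fin, hwq] at hle
      rcases Nat.eq_zero_or_pos q with h0 | h0
      · rw [h0] at hle; simp at hle; omega
      · rw [if_neg (by omega)] at hle
        simp at hle
        omega
    obtain ⟨v, hv⟩ := hex
    refine weight_piece_in_range n R w (v := v) (fun s hs => ?_) ω
      (LinearMap.mem_ker.1 hst)
    rcases Nat.eq_zero_or_pos q with h0 | h0
    · subst h0
      rw [chi_zero_of_q_zero]
      simpa using hv
    · calc chi n s v ≤ 1 := chi_le_one n hs v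
        _ ≤ w v := by rw [if_neg (by omega)] at hv; exact hv
  · rw [piW_eq_zero_of_sum_ne n R w hwq ω]
    exact Submodule.zero_mem _

end CechProj
end

open CechProj in
theorem bott_vanishing_for_cayley_trick
    (k : Type) [Field k] (n q : ℕ) (hn : 1 ≤ n) (hq1 : 1 ≤ q) (hq2 : q ≤ n) :
    (∀ p : ℕ, Subsingleton (cohomologyOmega n k q p)) ∧
    (∀ p : ℕ, 1 ≤ p → Subsingleton (cohomologyOmega n k 0 p)) := by
  constructor
  · intro p
    cases p with
    | zero =>
      apply subsingleton_of_ker_le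
      intro ω hst
      show ω ∈ (⊥ : Submodule k (CochainOmega n k q 0))
      rw [Submodule.mem_bot]
      obtain ⟨S, hS⟩ := cochain_decomp n k ω
      rw [hS]
      refine Finset.sum_eq_zero (fun w hw => ?_)
      by_cases hwq : (∑ i, w i) = (q : ℤ)
      · exact weight_zero_piece n k hq1 hn w hwq ω (LinearMap.mem_ker.1 hst)
      · exact piW_eq_zero_of_sum_ne n k w hwq ω
    | succ p' =>
      apply subsingleton_of_ker_le
      intro ω hst
      show ω ∈ LinearMap.range (cechDOmega n k q p')
      exact ker_le_range n k hn hst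
  · intro p hp
    match p, hp with
    | p' + 1, _ =>
      apply subsingleton_of_ker_le
      intro ω hst
      show ω ∈ LinearMap.range (cechDOmega n k 0 p')
      exact ker_le_range n k hn hst
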